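/- Let a be an element of the ground model V and φ(x) a formula in the language of set theory. Then there is a condition p ∈ 𝕊 forcing φ(ǎ) if and only if every condition of 𝕊 forces φ(ǎ). -/

import Mathlib

open scoped Classical

/-! # Core framework: second-order logic over levels of Gödel's `L` -/

/-- The von Neumann natural numbers inside `ZFSet`. -/
noncomputable def natToZF : ℕ → ZFSet.{0}
  | 0 => ∅
  | n+1 => insert (natToZF n) (natToZF n)

/-- Formulas of second-order logic in the language of set theory (de Bruijn indices,
first-order variables and second-order (subset) variables). -/
inductive SOFormula : Type
  | memFF : ℕ → ℕ → SOFormula        -- xᵢ ∈ xⱼ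
  | eqFF  : ℕ → ℕ → SOFormula        -- xᵢ = xⱼ
  | memFS : ℕ → ℕ → SOFormula        -- xᵢ ∈ Xⱼ
  | not   : SOFormula → SOFormula
  | and   : SOFormula → SOFormula → SOFormula
  | allFO : SOFormula → SOFormula
  | exFO  : SOFormula → SOFormula
  | allSO : SOFormula → SOFormula
  | exSO  : SOFormula → SOFormula

/-- Prepend a value to a valuation (de Bruijn style). -/
def consF {α : Sort _} (a : α) (v : ℕ → α) : ℕ → α
  | 0 => a
  | n+1 => v n

/-- Satisfaction of a second-order formula in the structure `(A, ∈)`, where first-order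
quantifiers range over the elements of `A`, and second-order quantifiers range over those
subsets `S` of `A` satisfying the predicate `D` (taking `D := fun _ => True` gives full
second-order logic, i.e. quantification over the full powerset of `A`; other choices of `D`
give the relativization of satisfaction to an inner model or a generic extension). -/
def SOSatIn (D : Set ZFSet.{0} → Prop) (A : ZFSet.{0}) :
    SOFormula → (ℕ → ZFSet.{0}) → (ℕ → Set ZFSet.{0}) → Prop
  | .memFF i j, v, _ => v i ∈ v j
  | .eqFF i j, v, _ => v i = v j
  | .memFS i j, v, V => v i ∈ V j
  | .not φ, v, V => ¬ SOSatIn D A φ v V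
  | .and φ ψ, v, V => SOSatIn D A φ v V ∧ SOSatIn D A ψ v V
  | .allFO φ, v, V => ∀ a : ZFSet, a ∈ A → SOSatIn D A φ (consF a v) V
  | .exFO φ, v, V => ∃ a : ZFSet, a ∈ A ∧ SOSatIn D A φ (consF a v) V
  | .allSO φ, v, V => ∀ S : Set ZFSet, S ⊆ A.toSet → D S → SOSatIn D A φ v (consF S V)
  | .exSO φ, v, V => ∃ S : Set ZFSet, S ⊆ A.toSet ∧ D S ∧ SOSatIn D A φ v (consF S V)

/-- Full (unrelativized) second-order satisfaction over `(A, ∈)`. -/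
def SOSat (A : ZFSet.{0}) : SOFormula → (ℕ → ZFSet.{0}) → (ℕ → Set ZFSet.{0}) → Prop :=
  SOSatIn (fun _ => True) A

/-- A formula with no second-order quantifiers ("arithmetic" / second-order quantifier free). -/
def NoSOQuant : SOFormula → Prop
  | .memFF _ _ => True
  | .eqFF _ _ => True
  | .memFS _ _ => True
  | .not φ => NoSOQuant φ
  | .and φ ψ => NoSOQuant φ ∧ NoSOQuant ψ
  | .allFO φ => NoSOQuant φ
  | .exFO φ => NoSOQuant φ
  | .allSO _ => False
  | .exSO _ => False

mutual
  /-- `Σ¹ₙ` formulas: `n` alternating blocks of second-order quantifiers, starting with `∃`,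
  in front of a second-order quantifier free matrix. -/
  inductive IsSigmaSO : ℕ → SOFormula → Prop
    | arith {φ : SOFormula} (n : ℕ) : NoSOQuant φ → IsSigmaSO n φ
    | exq {n : ℕ} {φ : SOFormula} : IsPiSO n φ → IsSigmaSO (n+1) (SOFormula.exSO φ)
    | exq2 {n : ℕ} {φ : SOFormula} : IsSigmaSO (n+1) φ → IsSigmaSO (n+1) (SOFormula.exSO φ)
  /-- `Π¹ₙ` formulas. -/
  inductive IsPiSO : ℕ → SOFormula → Prop
    | arith {φ : SOFormula} (n : ℕ) : NoSOQuant φ → IsPiSO n φ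
    | allq {n : ℕ} {φ : SOFormula} : IsSigmaSO n φ → IsPiSO (n+1) (SOFormula.allSO φ)
    | allq2 {n : ℕ} {φ : SOFormula} : IsPiSO (n+1) φ → IsPiSO (n+1) (SOFormula.allSO φ)
end

/-- The two pointclasses `Σ` and `Π`. -/
inductive SOClass : Type
  | sigma : SOClass
  | pi : SOClass

/-- `Γ¹ₙ` formulas, for `Γ ∈ {Σ, Π}`. -/
def IsGammaSO : SOClass → ℕ → SOFormula → Prop
  | .sigma => IsSigmaSO
  | .pi => IsPiSO

/-- `x` is a subset of `A` which is definable over `(A, ∈)` by a first-order formula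
with parameters from `A`. -/
def DefinableSub (A x : ZFSet.{0}) : Prop :=
  ∃ (φ : SOFormula) (v : ℕ → ZFSet), NoSOQuant φ ∧ (∀ n, v n ∈ A) ∧
    ∀ y, y ∈ x ↔ y ∈ A ∧ SOSat A φ (consF y v) (fun _ => ∅)

/-- The definable powerset operation. -/
noncomputable def defPow (A : ZFSet.{0}) : ZFSet.{0} :=
  ZFSet.sep (fun x => DefinableSub A x) (ZFSet.powerset A)

/-- The `o`-th level `L_o` of Gödel's constructible hierarchy. -/
noncomputable def LSet (o : Ordinal.{0}) : ZFSet.{0} :=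
  Ordinal.limitRecOn o ∅ (fun _ ih => defPow ih)
    (fun o' _ ih => ZFSet.sUnion (ZFSet.range (fun i : o'.ToType =>
      ih (Ordinal.ToType.mk.symm i).1 (Ordinal.ToType.mk.symm i).2)))

/-- A set is constructible if it belongs to some level of the `L`-hierarchy. -/
def Constructible (x : ZFSet.{0}) : Prop := ∃ o : Ordinal.{0}, x ∈ LSet o

/-- The collection of subsets of the universe that exist in `L`
(used to relativize second-order quantifiers to `L`). -/
def ConstructibleD : Set ZFSet.{0} → Prop :=
  fun S => ∃ z : ZFSet, Constructible z ∧ S = z.toSet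

/-- The von Neumann ordinal corresponding to an `Ordinal`. -/
noncomputable def ordToZF (o : Ordinal.{0}) : ZFSet.{0} :=
  ZFSet.range (fun i : o.ToType =>
    have : (Ordinal.ToType.mk.symm i).1 < o := (Ordinal.ToType.mk.symm i).2
    ordToZF (Ordinal.ToType.mk.symm i).1)
  termination_by o
  decreasing_by exact this

/-- The valuation assigning the (von Neumann codes of the) ordinal parameters
`β 0, …, β (l-1)` to the first `l` first-order variables. -/
noncomputable def paramVal (l : ℕ) (β : ℕ → Ordinal.{0}) : ℕ → ZFSet.{0} :=
  fun i => if i < l then ordToZF (β i) else ∅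

/-- `α` is `Γ¹ₙ`-reflecting, with second-order quantifiers relativized to `D`:
for every tuple `β 0 < … < β (l-1) < α` and every `Γ¹ₙ` formula `φ`, if `L_α ⊨ φ(β⃗)`
then there is `α'` with `β (l-1) < α' < α` and `L_{α'} ⊨ φ(β⃗)`. -/
def ReflectingIn (D : Set ZFSet.{0} → Prop) (Γ : SOClass) (n : ℕ) (α : Ordinal.{0}) : Prop :=
  ∀ (l : ℕ) (β : ℕ → Ordinal.{0}),
    (∀ i j, i < j → j < l → β i < β j) → (∀ i, i < l → β i < α) →
    ∀ φ : SOFormula, IsGammaSO Γ n φ →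
      SOSatIn D (LSet α) φ (paramVal l β) (fun _ => ∅) →
      ∃ α' : Ordinal, (∀ i, i < l → β i < α') ∧ α' < α ∧
        SOSatIn D (LSet α') φ (paramVal l β) (fun _ => ∅)

/-- `α` is `Γ¹ₙ`-reflecting (full second-order logic, i.e. computed in `V`). -/
def Reflecting : SOClass → ℕ → Ordinal.{0} → Prop := ReflectingIn (fun _ => True)

/-- The least `Γ¹ₙ`-reflecting ordinal, relativized to `D`. -/
noncomputable def leastReflecting (D : Set ZFSet.{0} → Prop) (Γ : SOClass) (n : ℕ) :
    Ordinal.{0} :=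
  sInf {α | ReflectingIn D Γ n α}

/-- `σ¹ₙ`, the least `Σ¹ₙ`-reflecting ordinal. -/
noncomputable def sigma1 (n : ℕ) : Ordinal.{0} := leastReflecting (fun _ => True) .sigma n

/-- `π¹ₙ`, the least `Π¹ₙ`-reflecting ordinal. -/
noncomputable def pi1 (n : ℕ) : Ordinal.{0} := leastReflecting (fun _ => True) .pi n

/-- `(σ¹ₙ)^L`. -/
noncomputable def sigma1L (n : ℕ) : Ordinal.{0} := leastReflecting ConstructibleD .sigma n

/-- `(π¹ₙ)^L`. -/
noncomputable def pi1L (n : ℕ) : Ordinal.{0} := leastReflecting ConstructibleD .pi n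

/-- The first uncountable ordinal `ω₁` (of `V`). -/
noncomputable def omega1V : Ordinal.{0} := (Cardinal.aleph 1).ord
/-! # The concrete forcing notions -/

/-- Cohen forcing `ℂ_X`: finite partial functions `X × ω → 2`, coded as finite functional
sets of pairs, ordered by reverse inclusion. -/
def CohenCond (X : Type) : Type :=
  {s : Finset ((X × ℕ) × Bool) // ∀ a b b', (a, b) ∈ s → (a, b') ∈ s → b = b'}

instance CohenCond.preorder (X : Type) : Preorder (CohenCond X) where
  le p q := q.1 ⊆ p.1
  le_refl p := Finset.Subset.refl _
  le_trans p q r h h' := Finset.Subset.trans h' h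

/-- The maximal condition (empty function) of Cohen forcing. -/
def CohenTop (X : Type) : CohenCond X :=
  ⟨∅, by intro a b b' h; simp at h⟩

/-- `p` is a perfect subtree of `2^{<ω}`. -/
def SacksTree (p : Set (List Bool)) : Prop :=
  p.Nonempty ∧ (∀ s t : List Bool, s <+: t → t ∈ p → s ∈ p) ∧
    ∀ t ∈ p, ∃ t' ∈ p, t <+: t' ∧ t' ++ [false] ∈ p ∧ t' ++ [true] ∈ p

/-- Sacks forcing: perfect subtrees of `2^{<ω}` ordered by inclusion. -/
def Sacks : Type := {p : Set (List Bool) // SacksTree p}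

instance Sacks.preorder : Preorder Sacks where
  le p q := p.1 ⊆ q.1
  le_refl p := subset_rfl
  le_trans p q r h h' := Set.Subset.trans h h'

/-- The maximal condition of Sacks forcing: the full binary tree. -/
def SacksTop : Sacks :=
  ⟨Set.univ, ⟨⟨[], trivial⟩, fun _ _ _ _ => trivial,
    fun t _ => ⟨t, trivial, List.prefix_refl t, trivial, trivial⟩⟩⟩

/-- `T` is a Laver tree: a subtree of `ω^{<ω}` with a stem below which every node splits
infinitely. -/
def LaverTree (T : Set (List ℕ)) : Prop :=
  T.Nonempty ∧ (∀ s t : List ℕ, s <+: t → t ∈ T → s ∈ T) ∧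
    ∃ s ∈ T, (∀ t ∈ T, t <+: s ∨ s <+: t) ∧
      ∀ t ∈ T, s <+: t → {n : ℕ | t ++ [n] ∈ T}.Infinite

/-- Laver forcing. -/
def Laver : Type := {T : Set (List ℕ) // LaverTree T}

instance Laver.preorder : Preorder Laver where
  le p q := p.1 ⊆ q.1
  le_refl p := subset_rfl
  le_trans p q r h h' := Set.Subset.trans h h'

/-- `T` is a superperfect (Miller) tree: a subtree of `ω^{<ω}` in which every node extends
to an infinitely splitting node. -/
def MillerTree (T : Set (List ℕ)) : Prop :=
  T.Nonempty ∧ (∀ s t : List ℕ, s <+: t → t ∈ T → s ∈ T) ∧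
    ∀ t ∈ T, ∃ t' ∈ T, t <+: t' ∧ {n : ℕ | t' ++ [n] ∈ T}.Infinite

/-- Miller forcing. -/
def Miller : Type := {T : Set (List ℕ) // MillerTree T}

instance Miller.preorder : Preorder Miller where
  le p q := p.1 ⊆ q.1
  le_refl p := subset_rfl
  le_trans p q r h h' := Set.Subset.trans h h'

/-- A constructible real: a constructible subset of `ω`. -/
def LReal : Type 1 := {x : ZFSet.{0} // x ⊆ ZFSet.omega ∧ Constructible x}

/-- The collapse forcing `ℙ = ℙ^L`: finite sequences of (constructible) reals ordered by
end extension. -/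
def CollapseP : Type 1 := List LReal

instance CollapseP.preorder : Preorder CollapseP where
  le p q := q <+: p
  le_refl p := List.prefix_refl p
  le_trans p q r h h' := List.IsPrefix.trans h' h
/-! # Names for arbitrary sets and the full forcing relation -/

/-- `P`-names for arbitrary sets of the generic extension: a name is a family of names
together with, for each of them, a set of conditions putting it into the named set. -/
inductive SName (P : Type) : Type 1
  | mk (α : Type) (f : α → SName P) (g : α → Set P) : SName P

/-- The rank of a name. -/
noncomputable def SName.rank {P : Type} : SName P → Ordinal.{0}
  | .mk _ f _ => Ordinal.lsub fun a => (f a).rank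

theorem SName.rank_lt {P : Type} (α : Type) (f : α → SName P) (g : α → Set P) (a : α) :
    (f a).rank < (SName.mk α f g).rank := by
  simpa [SName.rank] using Ordinal.lt_lsub (fun a => (f a).rank) a

theorem lex_maxMin_lt {x a c : Ordinal.{0}} (h : x < a) :
    toLex (max x c, min x c) < toLex (max a c, min a c) := by
  rw [Prod.Lex.toLex_lt_toLex]
  rcases le_total x c with h1 | h1 <;> rcases le_total a c with h2 | h2
  · right; simp [max_eq_right h1, max_eq_right h2, min_eq_left h1, min_eq_left h2, h]
  · rcases lt_or_eq_of_le h2 with h3 | h3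
    · left; simp only [max_eq_right h1, max_eq_left h2]; exact h3
    · subst h3; right; simp [min_eq_left h1, h, h1]
  · exact absurd (h2.trans h1) (not_le.2 h)
  · left; simp only [max_eq_left h1, max_eq_left h2]; exact h

/-- The definable forcing relation for atomic formulas: `FME true σ τ p` means
`p ⊩ σ = τ`, and `FME false σ τ p` means `p ⊩ σ ∈ τ`, with the standard recursive
clauses. -/
noncomputable def FME {P : Type} [Preorder P] : Bool → SName P → SName P → P → Prop
  | true, .mk α f g, .mk β h k, p =>
      (∀ a : α, ∀ q ≤ p, q ∈ g a → FME false (f a) (.mk β h k) q) ∧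
      (∀ b : β, ∀ q ≤ p, q ∈ k b → FME false (h b) (.mk α f g) q)
  | false, σ, .mk β h k, p =>
      ∀ q ≤ p, ∃ r ≤ q, ∃ b : β, r ∈ k b ∧ FME true σ (h b) r
  termination_by b σ τ _ => toLex (max σ.rank τ.rank, min σ.rank τ.rank)
  decreasing_by
  · exact lex_maxMin_lt (SName.rank_lt α f g a)
  · have := lex_maxMin_lt (c := (SName.mk α f g).rank) (SName.rank_lt β h k b)
    rwa [max_comm (SName.mk β h k).rank, min_comm (SName.mk β h k).rank] at this
  · have := lex_maxMin_lt (c := σ.rank) (SName.rank_lt β h k b)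
    rwa [max_comm (h b).rank, min_comm (h b).rank, max_comm (SName.mk β h k).rank,
      min_comm (SName.mk β h k).rank] at this

/-- The forcing relation `p ⊩ φ(v⃗)` for (first-order) formulas in the language of set
theory, with first-order quantifiers ranging over all names (i.e. over the whole generic
extension). -/
def ForcesSet {P : Type} [Preorder P] : P → SOFormula → (ℕ → SName P) → Prop
  | p, .memFF i j, v => FME false (v i) (v j) p
  | p, .eqFF i j, v => FME true (v i) (v j) p
  | _, .memFS _ _, _ => False
  | p, .not φ, v => ∀ q ≤ p, ¬ ForcesSet q φ v
  | p, .and φ ψ, v => ForcesSet p φ v ∧ ForcesSet p ψ v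
  | p, .allFO φ, v => ∀ σ : SName P, ForcesSet p φ (consF σ v)
  | p, .exFO φ, v => ∀ q ≤ p, ∃ r ≤ q, ∃ σ : SName P, ForcesSet r φ (consF σ v)
  | _, .allSO _, _ => False
  | _, .exSO _, _ => False

/-- The check name `x̌` of a hereditarily given set. -/
noncomputable def PSet.toSName (P : Type) : PSet.{0} → SName P
  | .mk α A => .mk α (fun a => PSet.toSName P (A a)) (fun _ => Set.univ)

/-- The check name `x̌` of a ground model set `x`. -/
noncomputable def checkSName (P : Type) (x : ZFSet.{0}) : SName P :=
  PSet.toSName P (Quotient.out x)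

theorem lex_maxMin_lt2 {x a c : Ordinal.{0}} (h : x < a) :
    toLex (max c x, min c x) < toLex (max c a, min c a) := by
  rw [max_comm c x, min_comm c x, max_comm c a, min_comm c a]; exact lex_maxMin_lt h

theorem lex_maxMin_lt3 {x a c : Ordinal.{0}} (h : x < a) :
    toLex (max x c, min x c) < toLex (max c a, min c a) := by
  rw [max_comm c a, min_comm c a]; exact lex_maxMin_lt h

/-! ### Auxiliary list lemmas -/

theorem SacksAux.list_trichotomy (l m : List Bool) :
    l <+: m ∨ m <+: l ∨ ∃ v a b, a ≠ b ∧ v ++ [a] <+: l ∧ v ++ [b] <+: m := by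
  induction l generalizing m with
  | nil => exact Or.inl (List.nil_prefix)
  | cons x l ih =>
    cases m with
    | nil => exact Or.inr (Or.inl List.nil_prefix)
    | cons y m =>
      by_cases hxy : x = y
      · subst hxy
        rcases ih m with h | h | ⟨v, a, b, hab, h1, h2⟩
        · exact Or.inl (List.cons_prefix_cons.mpr ⟨rfl, h⟩)
        · exact Or.inr (Or.inl (List.cons_prefix_cons.mpr ⟨rfl, h⟩))
        · refine Or.inr (Or.inr ⟨x :: v, a, b, hab, ?_, ?_⟩)
          · show x :: (v ++ [a]) <+: x :: l
            exact List.cons_prefix_cons.mpr ⟨rfl, h1⟩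
          · show x :: (v ++ [b]) <+: x :: m
            exact List.cons_prefix_cons.mpr ⟨rfl, h2⟩
      · refine Or.inr (Or.inr ⟨[], x, y, hxy, ?_, ?_⟩) <;>
          simp [List.cons_prefix_cons]

theorem SacksAux.snoc_prefix_of_proper {t s : List Bool} (h : t <+: s) (hne : t ≠ s) :
    ∃ b, t ++ [b] <+: s := by
  obtain ⟨u, rfl⟩ := h
  cases u with
  | nil => simp at hne
  | cons b u => exact ⟨b, ⟨u, by simp⟩⟩

theorem SacksAux.snoc_ne_prefix {v : List Bool} {a b : Bool} {z : List Bool} (hab : a ≠ b)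
    (h1 : v ++ [a] <+: z) (h2 : v ++ [b] <+: z) : False := by
  rcases List.prefix_or_prefix_of_prefix h1 h2 with h | h
  · have h' := h.eq_of_length (by simp)
    simp at h'
    exact hab h'
  · have h' := h.eq_of_length (by simp)
    simp at h'
    exact hab h'.symm

theorem SacksAux.prefix_of_prefix_snoc {t v : List Bool} {a : Bool}
    (h : t <+: v ++ [a]) (hne : t ≠ v ++ [a]) : t <+: v := by
  rcases List.prefix_or_prefix_of_prefix h (List.prefix_append v [a]) with h' | h'
  · exact h'
  · by_cases ht : t.length = v.length + 1
    · exact absurd (h.eq_of_length (by simpa using ht)) hne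
    · have h2 := h.length_le
      simp at h2
      have h3 : t.length ≤ v.length := by omega
      have : v = t := h'.eq_of_length (le_antisymm h'.length_le h3)
      exact this ▸ List.prefix_refl _

/-! ### Operations on names: image along a map, restriction of the condition sets -/

noncomputable def SName.emap {P : Type} (F : P → P) : SName P → SName P
  | .mk α f g => .mk α (fun a => SName.emap F (f a)) (fun a => F '' (g a))

def SName.res {P : Type} (C : Set P) : SName P → SName P
  | .mk α f g => .mk α (fun a => SName.res C (f a)) (fun a => g a ∩ C)

theorem SName.res_res {P : Type} (C : Set P) (σ : SName P) :
    SName.res C (SName.res C σ) = SName.res C σ := by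
  induction σ with
  | mk α f g ih =>
    simp only [SName.res]
    have hf : (fun a => SName.res C (SName.res C (f a))) = (fun a => SName.res C (f a)) :=
      funext fun a => ih a
    have hg : (fun a => (g a ∩ C) ∩ C) = (fun a => g a ∩ C) :=
      funext fun a => by rw [Set.inter_assoc, Set.inter_self]
    rw [hf, hg]

/-- An isomorphism between the whole poset `P` and the cone below `p`. -/
structure ConeMap (P : Type) [Preorder P] (p : P) where
  E : P → P
  E' : P → P
  mono : ∀ q r : P, q ≤ r ↔ E q ≤ E r
  le_p : ∀ q, E q ≤ p
  left : ∀ q, E' (E q) = q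
  right : ∀ q, q ≤ p → E (E' q) = q

namespace ConeMap

variable {P : Type} [Preorder P] {p : P} (c : ConeMap P p)

theorem res_emap (σ : SName P) :
    SName.res {z | z ≤ p} (SName.emap c.E σ) = SName.emap c.E σ := by
  induction σ with
  | mk α f g ih =>
    simp only [SName.emap, SName.res]
    have hf : (fun a => SName.res {z | z ≤ p} (SName.emap c.E (f a)))
        = (fun a => SName.emap c.E (f a)) := funext fun a => ih a
    have hg : (fun a => (c.E '' g a) ∩ {z | z ≤ p}) = (fun a => c.E '' g a) := by
      funext a
      apply Set.inter_eq_self_of_subset_left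
      rintro x ⟨y, _, rfl⟩
      exact c.le_p y
    rw [hf, hg]

theorem emap_emap'_res (σ : SName P) :
    SName.emap c.E (SName.emap c.E' (SName.res {z | z ≤ p} σ)) = SName.res {z | z ≤ p} σ := by
  induction σ with
  | mk α f g ih =>
    simp only [SName.emap, SName.res]
    have hf : (fun a => SName.emap c.E (SName.emap c.E' (SName.res {z | z ≤ p} (f a))))
        = (fun a => SName.res {z | z ≤ p} (f a)) := funext fun a => ih a
    have hg : (fun a => c.E '' (c.E' '' (g a ∩ {z | z ≤ p}))) = (fun a => g a ∩ {z | z ≤ p}) := by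
      funext a
      ext x
      constructor
      · rintro ⟨y, ⟨z, hz, rfl⟩, rfl⟩
        rwa [c.right z hz.2]
      · intro hx
        exact ⟨c.E' x, ⟨x, hx, rfl⟩, c.right x hx.2⟩
    rw [hf, hg]

theorem emap_toSName (x : PSet.{0}) :
    SName.emap c.E (PSet.toSName P x) = SName.res {z | z ≤ p} (PSet.toSName P x) := by
  induction x with
  | mk α A ih =>
    simp only [PSet.toSName, SName.emap, SName.res]
    have hf : (fun a => SName.emap c.E (PSet.toSName P (A a)))
        = (fun a => SName.res {z | z ≤ p} (PSet.toSName P (A a))) := funext fun a => ih a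
    have hg : (fun _a : α => c.E '' Set.univ) = (fun _a : α => Set.univ ∩ {z | z ≤ p}) := by
      funext a
      ext x
      constructor
      · rintro ⟨y, _, rfl⟩
        exact ⟨trivial, c.le_p y⟩
      · rintro ⟨_, hx⟩
        refine ⟨c.E' x, trivial, c.right x hx⟩
    rw [hf, hg]

theorem pre_of_le {q' r : P} (h : q' ≤ c.E r) : c.E (c.E' q') = q' ∧ c.E' q' ≤ r := by
  have hq'p : q' ≤ p := le_trans h (c.le_p r)
  have hE : c.E (c.E' q') = q' := c.right q' hq'p
  exact ⟨hE, (c.mono _ _).mpr (by rw [hE]; exact h)⟩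

end ConeMap

/-! ### Transfer of the forcing relation along cone maps and restrictions -/

section Transfer

variable {P : Type} [Preorder P] {p : P}

theorem fme_res (b : Bool) (σ τ : SName P) (q : P) (hq : q ≤ p) :
    FME b σ τ q ↔ FME b (SName.res {z | z ≤ p} σ) (SName.res {z | z ≤ p} τ) q := by
  cases b with
  | true =>
    obtain ⟨α, f, g⟩ := σ
    obtain ⟨β, h, k⟩ := τ
    simp only [SName.res]
    rw [FME, FME]
    constructor
    · rintro ⟨h1, h2⟩
      constructor
      · intro a q' hq' hm
        have := (fme_res false (f a) (.mk β h k) q' (le_trans hq' hq)).mp (h1 a q' hq' hm.1)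
        simpa only [SName.res] using this
      · intro b' q' hq' hm
        have := (fme_res false (h b') (.mk α f g) q' (le_trans hq' hq)).mp (h2 b' q' hq' hm.1)
        simpa only [SName.res] using this
    · rintro ⟨h1, h2⟩
      constructor
      · intro a q' hq' hm
        have hmem : q' ∈ g a ∩ {z | z ≤ p} := ⟨hm, le_trans hq' hq⟩
        have := h1 a q' hq' hmem
        exact (fme_res false (f a) (.mk β h k) q' (le_trans hq' hq)).mpr
          (by simpa only [SName.res] using this)
      · intro b' q' hq' hm
        have hmem : q' ∈ k b' ∩ {z | z ≤ p} := ⟨hm, le_trans hq' hq⟩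
        have := h2 b' q' hq' hmem
        exact (fme_res false (h b') (.mk α f g) q' (le_trans hq' hq)).mpr
          (by simpa only [SName.res] using this)
  | false =>
    obtain ⟨β, h, k⟩ := τ
    simp only [SName.res]
    rw [FME, FME]
    constructor
    · intro H q' hq'
      obtain ⟨r, hr, b', hmem, hf⟩ := H q' hq'
      refine ⟨r, hr, b', ⟨hmem, le_trans hr (le_trans hq' hq)⟩, ?_⟩
      exact (fme_res true σ (h b') r (le_trans hr (le_trans hq' hq))).mp hf
    · intro H q' hq'
      obtain ⟨r, hr, b', hmem, hf⟩ := H q' hq'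
      refine ⟨r, hr, b', hmem.1, ?_⟩
      exact (fme_res true σ (h b') r (le_trans hr (le_trans hq' hq))).mpr hf
  termination_by toLex (max σ.rank τ.rank, min σ.rank τ.rank)
  decreasing_by
  all_goals first
  | exact lex_maxMin_lt (SName.rank_lt _ _ _ _)
  | exact lex_maxMin_lt2 (SName.rank_lt _ _ _ _)
  | exact lex_maxMin_lt3 (SName.rank_lt _ _ _ _)

theorem fme_emap (c : ConeMap P p) (b : Bool) (σ τ : SName P) (r : P) :
    FME b σ τ r ↔ FME b (SName.emap c.E σ) (SName.emap c.E τ) (c.E r) := by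
  cases b with
  | true =>
    obtain ⟨α, f, g⟩ := σ
    obtain ⟨β, h, k⟩ := τ
    simp only [SName.emap]
    rw [FME, FME]
    constructor
    · rintro ⟨h1, h2⟩
      constructor
      · rintro a q' hq' ⟨q, hqg, rfl⟩
        have hqr : q ≤ r := (c.mono q r).mpr hq'
        have := (fme_emap c false (f a) (.mk β h k) q).mp (h1 a q hqr hqg)
        simpa only [SName.emap] using this
      · rintro b' q' hq' ⟨q, hqk, rfl⟩
        have hqr : q ≤ r := (c.mono q r).mpr hq'
        have := (fme_emap c false (h b') (.mk α f g) q).mp (h2 b' q hqr hqk)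
        simpa only [SName.emap] using this
    · rintro ⟨h1, h2⟩
      constructor
      · intro a q hq hm
        have := h1 a (c.E q) ((c.mono q r).mp hq) ⟨q, hm, rfl⟩
        exact (fme_emap c false (f a) (.mk β h k) q).mpr (by simpa only [SName.emap] using this)
      · intro b' q hq hm
        have := h2 b' (c.E q) ((c.mono q r).mp hq) ⟨q, hm, rfl⟩
        exact (fme_emap c false (h b') (.mk α f g) q).mpr (by simpa only [SName.emap] using this)
  | false =>
    obtain ⟨β, h, k⟩ := τ
    simp only [SName.emap]
    rw [FME, FME]
    constructor
    · intro H q' hq'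
      obtain ⟨hEq, hle⟩ := c.pre_of_le hq'
      obtain ⟨r', hr', b', hmem, hf⟩ := H (c.E' q') hle
      refine ⟨c.E r', ?_, b', ⟨r', hmem, rfl⟩, ?_⟩
      · rw [← hEq]; exact (c.mono _ _).mp hr'
      · exact (fme_emap c true σ (h b') r').mp hf
    · intro H q hq
      obtain ⟨r'', hr'', b', ⟨r', hmem, rfl⟩, hf⟩ := H (c.E q) ((c.mono q r).mp hq)
      refine ⟨r', (c.mono _ _).mpr hr'', b', hmem, ?_⟩
      exact (fme_emap c true σ (h b') r').mpr hf
  termination_by toLex (max σ.rank τ.rank, min σ.rank τ.rank)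
  decreasing_by
  all_goals first
  | exact lex_maxMin_lt (SName.rank_lt _ _ _ _)
  | exact lex_maxMin_lt2 (SName.rank_lt _ _ _ _)
  | exact lex_maxMin_lt3 (SName.rank_lt _ _ _ _)

theorem consF_res (σ : SName P) (v : ℕ → SName P) :
    (fun n => SName.res {z | z ≤ p} (consF σ v n))
      = consF (SName.res {z | z ≤ p} σ) (fun n => SName.res {z | z ≤ p} (v n)) := by
  funext n
  cases n <;> rfl

theorem consF_emap (F : P → P) (σ : SName P) (v : ℕ → SName P) :
    (fun n => SName.emap F (consF σ v n))
      = consF (SName.emap F σ) (fun n => SName.emap F (v n)) := by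
  funext n
  cases n <;> rfl

theorem forces_res (φ : SOFormula) (v : ℕ → SName P) (q : P) (hq : q ≤ p) :
    ForcesSet q φ v ↔ ForcesSet q φ (fun n => SName.res {z | z ≤ p} (v n)) := by
  induction φ generalizing v q with
  | memFF i j => exact fme_res false (v i) (v j) q hq
  | eqFF i j => exact fme_res true (v i) (v j) q hq
  | memFS i j => exact Iff.rfl
  | not φ ih =>
    simp only [ForcesSet]
    exact forall_congr' fun q' => forall_congr' fun hq' =>
      not_congr (ih v q' (le_trans hq' hq))
  | and φ ψ ih1 ih2 =>
    simp only [ForcesSet]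
    exact and_congr (ih1 v q hq) (ih2 v q hq)
  | allFO φ ih =>
    simp only [ForcesSet]
    have key : ∀ (σ : SName P) (r : P), r ≤ p →
        (ForcesSet r φ (consF σ v) ↔
          ForcesSet r φ (consF (SName.res {z | z ≤ p} σ) (fun n => SName.res {z | z ≤ p} (v n)))) := by
      intro σ r hr
      have h1 := ih (consF σ v) r hr
      rwa [consF_res] at h1
    have key2 : ∀ (σ : SName P) (r : P), r ≤ p →
        (ForcesSet r φ (consF σ (fun n => SName.res {z | z ≤ p} (v n))) ↔
          ForcesSet r φ (consF (SName.res {z | z ≤ p} σ) (fun n => SName.res {z | z ≤ p} (v n)))) := by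
      intro σ r hr
      have h1 := ih (consF σ (fun n => SName.res {z | z ≤ p} (v n))) r hr
      rw [consF_res] at h1
      have h2 : (fun n => SName.res {z | z ≤ p} (SName.res {z | z ≤ p} (v n)))
          = (fun n => SName.res {z | z ≤ p} (v n)) := funext fun n => SName.res_res _ _
      rwa [h2] at h1
    constructor
    · intro H σ
      refine (key2 σ q hq).mpr ?_
      have := (key (SName.res {z | z ≤ p} σ) q hq).mp (H _)
      rwa [SName.res_res] at this
    · intro H σ
      exact (key σ q hq).mpr (H (SName.res {z | z ≤ p} σ))
  | exFO φ ih =>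
    simp only [ForcesSet]
    have key : ∀ (σ : SName P) (r : P), r ≤ p →
        (ForcesSet r φ (consF σ v) ↔
          ForcesSet r φ (consF (SName.res {z | z ≤ p} σ) (fun n => SName.res {z | z ≤ p} (v n)))) := by
      intro σ r hr
      have h1 := ih (consF σ v) r hr
      rwa [consF_res] at h1
    have key2 : ∀ (σ : SName P) (r : P), r ≤ p →
        (ForcesSet r φ (consF σ (fun n => SName.res {z | z ≤ p} (v n))) ↔
          ForcesSet r φ (consF (SName.res {z | z ≤ p} σ) (fun n => SName.res {z | z ≤ p} (v n)))) := by
      intro σ r hr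
      have h1 := ih (consF σ (fun n => SName.res {z | z ≤ p} (v n))) r hr
      rw [consF_res] at h1
      have h2 : (fun n => SName.res {z | z ≤ p} (SName.res {z | z ≤ p} (v n)))
          = (fun n => SName.res {z | z ≤ p} (v n)) := funext fun n => SName.res_res _ _
      rwa [h2] at h1
    constructor
    · intro H q' hq'
      obtain ⟨r, hr, σ, hF⟩ := H q' hq'
      have hrp : r ≤ p := le_trans hr (le_trans hq' hq)
      exact ⟨r, hr, SName.res {z | z ≤ p} σ, (key2 _ r hrp).mpr
        (by rw [SName.res_res]; exact (key σ r hrp).mp hF)⟩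
    · intro H q' hq'
      obtain ⟨r, hr, σ, hF⟩ := H q' hq'
      have hrp : r ≤ p := le_trans hr (le_trans hq' hq)
      exact ⟨r, hr, SName.res {z | z ≤ p} σ,
        (key _ r hrp).mpr (by rw [SName.res_res]; exact (key2 σ r hrp).mp hF)⟩
  | allSO φ ih => exact Iff.rfl
  | exSO φ ih => exact Iff.rfl

theorem forces_emap (c : ConeMap P p) (φ : SOFormula) (v : ℕ → SName P) (r : P) :
    ForcesSet r φ v ↔ ForcesSet (c.E r) φ (fun n => SName.emap c.E (v n)) := by
  induction φ generalizing v r with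
  | memFF i j => exact fme_emap c false (v i) (v j) r
  | eqFF i j => exact fme_emap c true (v i) (v j) r
  | memFS i j => exact Iff.rfl
  | not φ ih =>
    simp only [ForcesSet]
    constructor
    · intro H q' hq' hcon
      obtain ⟨hEq, hle⟩ := c.pre_of_le hq'
      exact H (c.E' q') hle ((ih v (c.E' q')).mpr (by rwa [hEq]))
    · intro H q hq hcon
      exact H (c.E q) ((c.mono q r).mp hq) ((ih v q).mp hcon)
  | and φ ψ ih1 ih2 =>
    simp only [ForcesSet]
    exact and_congr (ih1 v r) (ih2 v r)
  | allFO φ ih =>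
    simp only [ForcesSet]
    constructor
    · intro H σ'
      have hA : ForcesSet (c.E r) φ
          (consF (SName.res {z | z ≤ p} σ') (fun n => SName.emap c.E (v n))) := by
        have h1 := (ih (consF (SName.emap c.E' (SName.res {z | z ≤ p} σ')) v) r).mp (H _)
        rw [consF_emap, c.emap_emap'_res] at h1
        exact h1
      have h2 := forces_res φ (consF σ' (fun n => SName.emap c.E (v n))) (c.E r) (c.le_p r)
      rw [consF_res] at h2
      have h3 : (fun n => SName.res {z | z ≤ p} (SName.emap c.E (v n)))
          = (fun n => SName.emap c.E (v n)) := funext fun n => c.res_emap _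
      rw [h3] at h2
      exact h2.mpr hA
    · intro H σ
      have := H (SName.emap c.E σ)
      rw [← consF_emap] at this
      exact (ih (consF σ v) r).mpr this
  | exFO φ ih =>
    simp only [ForcesSet]
    constructor
    · intro H q' hq'
      obtain ⟨hEq, hle⟩ := c.pre_of_le hq'
      obtain ⟨r', hr', σ, hF⟩ := H (c.E' q') hle
      refine ⟨c.E r', ?_, SName.emap c.E σ, ?_⟩
      · rw [← hEq]; exact (c.mono _ _).mp hr'
      · rw [← consF_emap]
        exact (ih (consF σ v) r').mp hF
    · intro H q hq
      obtain ⟨r'', hr'', σ', hF⟩ := H (c.E q) ((c.mono q r).mp hq)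
      have hr''p : r'' ≤ p := le_trans hr'' (c.le_p q)
      have hEr : c.E (c.E' r'') = r'' := c.right r'' hr''p
      have hF2 : ForcesSet r'' φ
          (consF (SName.res {z | z ≤ p} σ') (fun n => SName.emap c.E (v n))) := by
        have h2 := forces_res φ (consF σ' (fun n => SName.emap c.E (v n))) r'' hr''p
        rw [consF_res] at h2
        have h3 : (fun n => SName.res {z | z ≤ p} (SName.emap c.E (v n)))
            = (fun n => SName.emap c.E (v n)) := funext fun n => c.res_emap _
        rw [h3] at h2
        exact h2.mp hF
      refine ⟨c.E' r'', ?_, SName.emap c.E' (SName.res {z | z ≤ p} σ'), ?_⟩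
      · exact (c.mono _ _).mpr (by rw [hEr]; exact hr'')
      · refine (ih _ (c.E' r'')).mpr ?_
        rw [consF_emap, c.emap_emap'_res, hEr]
        exact hF2
  | allSO φ ih => exact Iff.rfl
  | exSO φ ih => exact Iff.rfl

end Transfer

/-! ### The Sacks poset is isomorphic to each of its cones -/

namespace SacksAux

theorem down_closed (p : Sacks) {s t : List Bool} (h : s <+: t) (ht : t ∈ p.1) : s ∈ p.1 :=
  p.2.2.1 s t h ht

theorem nil_mem (p : Sacks) : [] ∈ p.1 := by
  obtain ⟨x, hx⟩ := p.2.1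
  exact down_closed p List.nil_prefix hx

def Splits (p : Sacks) (t : List Bool) : Prop :=
  t ++ [false] ∈ p.1 ∧ t ++ [true] ∈ p.1

theorem mem_of_splits {p : Sacks} {t : List Bool} (h : Splits p t) : t ∈ p.1 :=
  down_closed p (List.prefix_append t [false]) h.1

theorem child_mem {p : Sacks} {u : List Bool} (h : Splits p u) (b : Bool) : u ++ [b] ∈ p.1 := by
  cases b
  · exact h.1
  · exact h.2

theorem exists_split_above {p : Sacks} {t : List Bool} (ht : t ∈ p.1) :
    ∃ u, t <+: u ∧ Splits p u := by
  obtain ⟨t', _, htt', h0, h1⟩ := p.2.2.2 t ht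
  exact ⟨t', htt', h0, h1⟩

theorem firstSplit_exists {p : Sacks} {t : List Bool} (ht : t ∈ p.1) :
    ∃ n : ℕ, ∃ u, u.length = n ∧ t <+: u ∧ Splits p u := by
  obtain ⟨u, h1, h2⟩ := exists_split_above ht
  exact ⟨u.length, u, rfl, h1, h2⟩

noncomputable def firstSplit (p : Sacks) (t : List Bool) : List Bool :=
  if h : ∃ n : ℕ, ∃ u, u.length = n ∧ t <+: u ∧ Splits p u then
    Classical.choose (Nat.find_spec h) else t

theorem firstSplit_spec {p : Sacks} {t : List Bool} (ht : t ∈ p.1) :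
    t <+: firstSplit p t ∧ Splits p (firstSplit p t) := by
  rw [firstSplit, dif_pos (firstSplit_exists ht)]
  have h := Classical.choose_spec (Nat.find_spec (firstSplit_exists ht))
  exact ⟨h.2.1, h.2.2⟩

theorem firstSplit_min {p : Sacks} {t : List Bool} (ht : t ∈ p.1) {u : List Bool}
    (htu : t <+: u) (hu : Splits p u) : (firstSplit p t).length ≤ u.length := by
  rw [firstSplit, dif_pos (firstSplit_exists ht)]
  have h := Classical.choose_spec (Nat.find_spec (firstSplit_exists ht))
  rw [h.1]
  exact Nat.find_le ⟨u, rfl, htu, hu⟩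

theorem splits_of_two {p : Sacks} {v : List Bool} {a b : Bool} (hab : a ≠ b)
    (ha : v ++ [a] ∈ p.1) (hb : v ++ [b] ∈ p.1) : Splits p v := by
  cases a <;> cases b <;> simp_all [Splits]

theorem le_firstSplit {p : Sacks} {t u : List Bool} (ht : t ∈ p.1) (htu : t <+: u)
    (hu : u ∈ p.1) : u <+: firstSplit p t ∨ firstSplit p t <+: u := by
  obtain ⟨h1, h2⟩ := firstSplit_spec ht
  rcases list_trichotomy u (firstSplit p t) with h | h | ⟨v, a, b, hab, hva, hvb⟩
  · exact Or.inl h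
  · exact Or.inr h
  · exfalso
    have hfmem : firstSplit p t ∈ p.1 := mem_of_splits h2
    have hva' : v ++ [a] ∈ p.1 := down_closed p hva hu
    have hvb' : v ++ [b] ∈ p.1 := down_closed p hvb hfmem
    have hvsp : Splits p v := splits_of_two hab hva' hvb'
    -- t <+: v
    have htva : t <+: v ++ [a] := by
      rcases List.prefix_or_prefix_of_prefix htu hva with h' | h'
      · exact h'
      · exfalso
        exact snoc_ne_prefix hab (h'.trans h1) hvb
    have htv : t <+: v := by
      apply prefix_of_prefix_snoc htva
      rintro rfl
      exact snoc_ne_prefix hab h1 hvb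
    have hlen1 : (firstSplit p t).length ≤ v.length := firstSplit_min ht htv hvsp
    have hlen2 := hvb.length_le
    simp at hlen2
    omega

theorem firstSplit_prefix_of_split {p : Sacks} {t u : List Bool} (ht : t ∈ p.1)
    (htu : t <+: u) (hu : Splits p u) : firstSplit p t <+: u := by
  rcases le_firstSplit ht htu (mem_of_splits hu) with h | h
  · have h1 := firstSplit_min ht htu hu
    have h2 := h.eq_of_length (le_antisymm h.length_le h1)
    exact h2 ▸ List.prefix_refl _
  · exact h

noncomputable def fnode (p : Sacks) (s : List Bool) : List Bool :=
  List.foldl (fun u b => firstSplit p (u ++ [b])) (firstSplit p []) s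

theorem fnode_nil (p : Sacks) : fnode p [] = firstSplit p [] := rfl

theorem fnode_snoc (p : Sacks) (s : List Bool) (b : Bool) :
    fnode p (s ++ [b]) = firstSplit p (fnode p s ++ [b]) := by
  simp [fnode, List.foldl_append]

theorem fnode_splits (p : Sacks) (s : List Bool) : Splits p (fnode p s) := by
  induction s using List.reverseRecOn with
  | nil => exact (firstSplit_spec (nil_mem p)).2
  | append_singleton s b ih =>
    rw [fnode_snoc]
    exact (firstSplit_spec (child_mem ih b)).2

theorem fnode_mem (p : Sacks) (s : List Bool) : fnode p s ∈ p.1 :=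
  mem_of_splits (fnode_splits p s)

theorem prefix_fnode_snoc (p : Sacks) (s : List Bool) (b : Bool) :
    fnode p s ++ [b] <+: fnode p (s ++ [b]) := by
  rw [fnode_snoc]
  exact (firstSplit_spec (child_mem (fnode_splits p s) b)).1

theorem fnode_mono (p : Sacks) {s s' : List Bool} (h : s <+: s') :
    fnode p s <+: fnode p s' := by
  obtain ⟨u, rfl⟩ := h
  induction u using List.reverseRecOn with
  | nil => simp
  | append_singleton u b ih =>
    have h1 : fnode p (s ++ u) <+: fnode p (s ++ u ++ [b]) :=
      (List.prefix_append _ [b]).trans (prefix_fnode_snoc p (s ++ u) b)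
    rw [← List.append_assoc]
    exact ih.trans h1

theorem fnode_reflect (p : Sacks) {s s' : List Bool} (h : fnode p s <+: fnode p s') :
    s <+: s' := by
  rcases list_trichotomy s s' with h1 | h1 | ⟨v, a, b, hab, hva, hvb⟩
  · exact h1
  · by_cases he : s' = s
    · exact he ▸ List.prefix_refl _
    · exfalso
      obtain ⟨c, hc⟩ := snoc_prefix_of_proper h1 he
      have h2 := ((prefix_fnode_snoc p s' c).trans ((fnode_mono p hc).trans h)).length_le
      simp at h2
  · exfalso
    have h1 := (prefix_fnode_snoc p v a).trans (fnode_mono p hva)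
    have h2 := (prefix_fnode_snoc p v b).trans (fnode_mono p hvb)
    exact snoc_ne_prefix hab (h1.trans h) h2

theorem fnode_surj (p : Sacks) : ∀ (n : ℕ) (u : List Bool), u.length = n → Splits p u →
    ∃ s, fnode p s = u := by
  intro n
  induction n using Nat.strong_induction_on with
  | _ n ih =>
    intro u hlen hu
    by_cases hD : ∃ v, v <+: u ∧ v ≠ u ∧ Splits p v
    · obtain ⟨v₀, hv₀u, hv₀ne, hv₀sp⟩ := hD
      have hQ : ∃ v, v.length = Nat.findGreatest
          (fun k => ∃ v, v.length = k ∧ v <+: u ∧ v ≠ u ∧ Splits p v) u.length ∧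
          v <+: u ∧ v ≠ u ∧ Splits p v := by
        have := Nat.findGreatest_spec (P := fun k => ∃ v, v.length = k ∧ v <+: u ∧ v ≠ u ∧ Splits p v)
          (hv₀u.length_le) ⟨v₀, rfl, hv₀u, hv₀ne, hv₀sp⟩
        exact this
      obtain ⟨v, hvlen, hvu, hvne, hvsp⟩ := hQ
      have hlt : v.length < u.length :=
        lt_of_le_of_ne hvu.length_le (fun h => hvne (hvu.eq_of_length h))
      obtain ⟨s, hs⟩ := ih v.length (hlen ▸ hlt) v rfl hvsp
      obtain ⟨c, hc⟩ := snoc_prefix_of_proper hvu hvne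
      refine ⟨s ++ [c], ?_⟩
      rw [fnode_snoc, hs]
      have hmem : v ++ [c] ∈ p.1 := down_closed p hc (mem_of_splits hu)
      have h1 : firstSplit p (v ++ [c]) <+: u := firstSplit_prefix_of_split hmem hc hu
      by_cases he : firstSplit p (v ++ [c]) = u
      · exact he
      · exfalso
        have hsp := (firstSplit_spec hmem).2
        have hlen2 : v.length < (firstSplit p (v ++ [c])).length := by
          have := (firstSplit_spec hmem).1.length_le
          simp at this
          omega
        have hg := Nat.findGreatest_is_greatest
          (P := fun k => ∃ v, v.length = k ∧ v <+: u ∧ v ≠ u ∧ Splits p v)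
          (n := u.length) (k := (firstSplit p (v ++ [c])).length) (by omega) h1.length_le
        exact hg ⟨firstSplit p (v ++ [c]), rfl, h1, he, hsp⟩
    · refine ⟨[], ?_⟩
      rw [fnode_nil]
      have h1 : firstSplit p [] <+: u :=
        firstSplit_prefix_of_split (nil_mem p) List.nil_prefix hu
      by_cases he : firstSplit p [] = u
      · exact he
      · exact absurd ⟨firstSplit p [], h1, he, (firstSplit_spec (nil_mem p)).2⟩ hD

noncomputable def phi (p : Sacks) (r : Sacks) : Sacks :=
  ⟨{u | ∃ s ∈ r.1, u <+: fnode p s}, by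
    refine ⟨⟨[], ?_⟩, ?_, ?_⟩
    · obtain ⟨x, hx⟩ := r.2.1
      exact ⟨x, hx, List.nil_prefix⟩
    · rintro s t hst ⟨s', hs', hts'⟩
      exact ⟨s', hs', hst.trans hts'⟩
    · rintro t ⟨s, hs, hts⟩
      obtain ⟨s', hs', hss', h0, h1⟩ := r.2.2.2 s hs
      refine ⟨fnode p s', ⟨s', hs', List.prefix_refl _⟩,
        hts.trans (fnode_mono p hss'), ?_, ?_⟩
      · exact ⟨s' ++ [false], h0, prefix_fnode_snoc p s' false⟩
      · exact ⟨s' ++ [true], h1, prefix_fnode_snoc p s' true⟩⟩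

theorem phi_le (p : Sacks) (r : Sacks) : phi p r ≤ p := by
  rintro u ⟨s, _, h⟩
  exact down_closed p h (fnode_mem p s)

theorem phi_mono (p : Sacks) {q r : Sacks} (h : q ≤ r) : phi p q ≤ phi p r := by
  rintro u ⟨s, hs, hu⟩
  exact ⟨s, h hs, hu⟩

theorem phi_reflect (p : Sacks) {q r : Sacks} (h : phi p q ≤ phi p r) : q ≤ r := by
  intro s hs
  obtain ⟨s', hs', h'⟩ := h ⟨s, hs, List.prefix_refl _⟩
  exact r.2.2.1 s s' (fnode_reflect p h') hs'

noncomputable def psi (p : Sacks) (r : Sacks) (hr : r ≤ p) : Sacks :=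
  ⟨{s | fnode p s ∈ r.1}, by
    refine ⟨⟨[], ?_⟩, ?_, ?_⟩
    · obtain ⟨t', ht', _, h0, h1⟩ := r.2.2.2 [] (nil_mem r)
      have hsp : Splits p t' := ⟨hr h0, hr h1⟩
      have := firstSplit_prefix_of_split (nil_mem p) List.nil_prefix hsp
      exact r.2.2.1 _ t' (fnode_nil p ▸ this) ht'
    · intro s t hst ht
      exact r.2.2.1 _ _ (fnode_mono p hst) ht
    · intro s hs
      obtain ⟨w, hw, hfw, hw0, hw1⟩ := r.2.2.2 (fnode p s) hs
      have hwsp : Splits p w := ⟨hr hw0, hr hw1⟩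
      obtain ⟨s₂, hs₂⟩ := fnode_surj p w.length w rfl hwsp
      have hss₂ : s <+: s₂ := fnode_reflect p (hs₂ ▸ hfw)
      have hchild : ∀ b : Bool, w ++ [b] ∈ r.1 → fnode p (s₂ ++ [b]) ∈ r.1 := by
        intro b hwb
        obtain ⟨w', hw', hww', h0', h1'⟩ := r.2.2.2 (w ++ [b]) hwb
        have hw'sp : Splits p w' := ⟨hr h0', hr h1'⟩
        have : firstSplit p (w ++ [b]) <+: w' :=
          firstSplit_prefix_of_split (hr hwb) hww' hw'sp
        refine r.2.2.1 _ w' ?_ hw'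
        rw [fnode_snoc, hs₂]
        exact this
      refine ⟨s₂, ?_, hss₂, hchild false hw0, hchild true hw1⟩
      show fnode p s₂ ∈ r.1
      rw [hs₂]
      exact hw⟩

theorem psi_phi (p : Sacks) (r : Sacks) : psi p (phi p r) (phi_le p r) = r := by
  apply Subtype.ext
  ext s
  constructor
  · rintro ⟨s', hs', h⟩
    exact r.2.2.1 s s' (fnode_reflect p h) hs'
  · intro hs
    exact ⟨s, hs, List.prefix_refl _⟩

theorem phi_psi (p : Sacks) (r : Sacks) (hr : r ≤ p) : phi p (psi p r hr) = r := by
  apply Subtype.ext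
  ext u
  constructor
  · rintro ⟨s, hs, h⟩
    exact r.2.2.1 u (fnode p s) h hs
  · intro hu
    obtain ⟨w, hw, huw, h0, h1⟩ := r.2.2.2 u hu
    have hwsp : Splits p w := ⟨hr h0, hr h1⟩
    obtain ⟨s₂, hs₂⟩ := fnode_surj p w.length w rfl hwsp
    refine ⟨s₂, ?_, hs₂ ▸ huw⟩
    show fnode p s₂ ∈ r.1
    rw [hs₂]
    exact hw

noncomputable def sacksConeMap (p : Sacks) : ConeMap Sacks p where
  E := fun r => phi p r
  E' := fun r => if h : r ≤ p then psi p r h else r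
  mono := fun q r => ⟨fun h => phi_mono p h, fun h => phi_reflect p h⟩
  le_p := fun q => phi_le p q
  left := fun q => by
    rw [dif_pos (phi_le p q)]
    exact psi_phi p q
  right := fun q hq => by
    rw [dif_pos hq]
    exact phi_psi p q hq

theorem sacks_le_top (q : Sacks) : q ≤ SacksTop :=
  fun x _ => trivial

theorem sacks_antisymm {q r : Sacks} (h1 : q ≤ r) (h2 : r ≤ q) : q = r :=
  Subtype.ext (Set.Subset.antisymm h1 h2)

theorem sacksConeMap_top (p : Sacks) : (sacksConeMap p).E SacksTop = p := by
  have h1 : (sacksConeMap p).E SacksTop ≤ p := (sacksConeMap p).le_p _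
  have h2 : p ≤ (sacksConeMap p).E SacksTop := by
    have h3 : (sacksConeMap p).E ((sacksConeMap p).E' p) = p :=
      (sacksConeMap p).right p (le_refl p)
    calc p = (sacksConeMap p).E ((sacksConeMap p).E' p) := h3.symm
    _ ≤ (sacksConeMap p).E SacksTop :=
        ((sacksConeMap p).mono _ _).mp (sacks_le_top _)
  exact sacks_antisymm h1 h2

end SacksAux

/-! ### Assembly -/

theorem sacks_forces_iff_top (p : Sacks) (a : ZFSet.{0}) (φ : SOFormula) :
    ForcesSet p φ (fun _ => checkSName Sacks a) ↔
      ForcesSet SacksTop φ (fun _ => checkSName Sacks a) := by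
  classical
  set c := SacksAux.sacksConeMap p with hc
  have h1 := forces_emap c φ (fun _ => checkSName Sacks a) SacksTop
  rw [SacksAux.sacksConeMap_top p] at h1
  have h2 : (fun _n : ℕ => SName.emap c.E (checkSName Sacks a))
      = fun _n : ℕ => SName.res {z | z ≤ p} (checkSName Sacks a) :=
    funext fun _ => c.emap_toSName (Quotient.out a)
  rw [h2] at h1
  have h3 := forces_res (p := p) φ (fun _ => checkSName Sacks a) p (le_refl p)
  exact h3.trans h1.symm

/-- Let `a` be an element of the ground model `V` and `φ(x)` a formula
in the language of set theory. Then there is a condition `p ∈ 𝕊` forcing `φ(ǎ)` if and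
only if every condition of `𝕊` forces `φ(ǎ)`. -/
theorem sacks_decides_ground_model_statements (a : ZFSet.{0}) (φ : SOFormula)
    (hφ : NoSOQuant φ) :
    (∃ p : Sacks, ForcesSet p φ (fun _ => checkSName Sacks a)) ↔
      ∀ p : Sacks, ForcesSet p φ (fun _ => checkSName Sacks a) := by
  constructor
  · rintro ⟨p, hp⟩ q
    exact (sacks_forces_iff_top q a φ).mpr ((sacks_forces_iff_top p a φ).mp hp)
  · intro h
    exact ⟨SacksTop, h SacksTop⟩
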